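/- With a_n = ∑_{j=0}^{n} I(j), the alternating sum satisfies ∑_{k=1}^{n} (−1)^{n−k}·C(n,k)·a_{k−1} = (2m)!/(2^m·m!) if n = 2m+1 is odd, and 0 if n = 2m is even (n ≥ 2). -/

import Mathlib

/-- Involution numbers via the recurrence. -/
def invRec : ℕ → ℕ
  | 0 => 1
  | 1 => 1
  | n + 2 => invRec (n + 1) + (n + 1) * invRec n

/-- Partial sums of the involution numbers. -/
def aSeq (n : ℕ) : ℕ := ∑ j ∈ Finset.range (n + 1), invRec j

lemma invRec_succ (j : ℕ) : invRec (j + 1) = invRec j + j * invRec (j - 1) := by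
  cases j with
  | zero => simp [invRec]
  | succ i => simp [invRec]

/-- The signed binomial transform of the involution numbers. -/
def Wseq (n : ℕ) : ℤ := ∑ k ∈ Finset.range (n + 1), (-1 : ℤ) ^ k * (n.choose k) * invRec k

lemma Lp (n j : ℕ) :
    ∑ k ∈ Finset.range (j + 1), (-1 : ℤ) ^ k * ((n + 1).choose k) = (-1) ^ j * (n.choose j) := by
  induction j with
  | zero => simp
  | succ j ih =>
      rw [Finset.sum_range_succ, ih, Nat.choose_succ_succ n j]
      push_cast
      ring

lemma Lp' (n j : ℕ) :
    ∑ i ∈ Finset.range j, (-1 : ℤ) ^ i * ((n + 1).choose (i + 1)) = 1 - (-1) ^ j * (n.choose j) := by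
  have h := Lp n j
  rw [Finset.sum_range_succ'] at h
  have : ∑ i ∈ Finset.range j, (-1 : ℤ) ^ (i + 1) * ((n + 1).choose (i + 1)) =
      -∑ i ∈ Finset.range j, (-1 : ℤ) ^ i * ((n + 1).choose (i + 1)) := by
    rw [← Finset.sum_neg_distrib]
    exact Finset.sum_congr rfl fun i _ => by ring
  rw [this] at h
  simp at h
  linarith

lemma W_rec (n : ℕ) : Wseq (n + 2) = (n + 1) * Wseq n := by
  have h1 : Wseq (n + 2) =
      (∑ j ∈ Finset.range (n + 2), (-1 : ℤ) ^ (j + 1) * ((n + 2).choose (j + 1)) * invRec (j + 1))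
        + 1 := by
    rw [Wseq, Finset.sum_range_succ']
    simp [invRec]
  have hterm : ∀ j ∈ Finset.range (n + 2),
      (-1 : ℤ) ^ (j + 1) * ((n + 2).choose (j + 1)) * invRec (j + 1) =
        (-((-1 : ℤ) ^ j * ((n + 1).choose j) * invRec j)
          + (-1 : ℤ) ^ (j + 1) * ((n + 1).choose j) * j * invRec (j - 1))
          + (-1 : ℤ) ^ (j + 1) * ((n + 1).choose (j + 1)) * invRec (j + 1) := by
    intro j _
    rw [invRec_succ j, Nat.choose_succ_succ (n + 1) j]
    push_cast
    ring
  rw [Finset.sum_congr rfl hterm, Finset.sum_add_distrib, Finset.sum_add_distrib] at h1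
  have hS1 : ∑ j ∈ Finset.range (n + 2), -((-1 : ℤ) ^ j * ((n + 1).choose j) * invRec j)
      = -Wseq (n + 1) := by
    rw [Finset.sum_neg_distrib]; rfl
  have hS2 : ∑ j ∈ Finset.range (n + 2), (-1 : ℤ) ^ (j + 1) * ((n + 1).choose j) * j * invRec (j - 1)
      = (n + 1) * Wseq n := by
    rw [Finset.sum_range_succ', Wseq, Finset.mul_sum]
    simp only [Nat.cast_zero, mul_zero, zero_mul, add_zero, Nat.add_sub_cancel]
    refine Finset.sum_congr rfl fun i _ => ?_
    have hc := Nat.add_one_mul_choose_eq n i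
    have hc' : ((n + 1 : ℕ) : ℤ) * (n.choose i) = ((n + 1).choose (i + 1)) * (i + 1) := by
      exact_mod_cast congrArg (Nat.cast : ℕ → ℤ) hc
    push_cast at hc' ⊢
    linear_combination (-((-1:ℤ)^i) * (invRec i : ℤ)) * hc'
  have hS3 : ∑ j ∈ Finset.range (n + 2), (-1 : ℤ) ^ (j + 1) * ((n + 1).choose (j + 1)) * invRec (j + 1)
      = Wseq (n + 1) - 1 := by
    rw [Finset.sum_range_succ]
    have hz : (n + 1).choose (n + 2) = 0 := Nat.choose_eq_zero_of_lt (by omega)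
    rw [hz]
    have : Wseq (n + 1) = (∑ j ∈ Finset.range (n + 1),
        (-1 : ℤ) ^ (j + 1) * ((n + 1).choose (j + 1)) * invRec (j + 1)) + 1 := by
      rw [Wseq, Finset.sum_range_succ']
      simp [invRec]
    rw [this]
    push_cast
    ring
  rw [hS1, hS2, hS3] at h1
  rw [h1]; ring

/-- Odd double factorial. -/
def oddFac : ℕ → ℕ
  | 0 => 1
  | m + 1 => (2 * m + 1) * oddFac m

lemma W_even (m : ℕ) : Wseq (2 * m) = oddFac m := by
  induction m with
  | zero => simp [Wseq, invRec, oddFac]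
  | succ m ih =>
      have h : 2 * (m + 1) = 2 * m + 2 := by ring
      rw [h, W_rec, ih, oddFac]
      push_cast
      ring

lemma W_odd (m : ℕ) : Wseq (2 * m + 1) = 0 := by
  induction m with
  | zero =>
      show Wseq 1 = 0
      rw [Wseq]
      simp [Finset.sum_range_succ, invRec]
  | succ m ih =>
      have h : 2 * (m + 1) + 1 = (2 * m + 1) + 2 := by ring
      rw [h, W_rec, ih, mul_zero]

lemma fac_eq (m : ℕ) : (2 * m).factorial = (2 ^ m * m.factorial) * oddFac m := by
  induction m with
  | zero => simp [oddFac]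
  | succ m ih =>
      have h : 2 * (m + 1) = 2 * m + 1 + 1 := by ring
      rw [h, Nat.factorial_succ, Nat.factorial_succ, ih, oddFac, Nat.factorial_succ, pow_succ]
      ring

lemma fac_div (m : ℕ) : (2 * m).factorial / (2 ^ m * m.factorial) = oddFac m := by
  rw [fac_eq, Nat.mul_div_cancel_left]
  positivity

lemma neg_pow_sub {a b : ℕ} (h : a ≤ b) : (-1 : ℤ) ^ (b - a) = (-1) ^ b * (-1) ^ a := by
  have h1 : (-1 : ℤ) ^ b = (-1) ^ (b - a) * (-1) ^ a := by
    rw [← pow_add, Nat.sub_add_cancel h]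
  have h2 : ((-1 : ℤ) ^ a) * ((-1) ^ a) = 1 := by
    rw [← pow_add, ← two_mul, pow_mul]; norm_num
  calc (-1 : ℤ) ^ (b - a) = (-1) ^ (b - a) * ((-1) ^ a * (-1) ^ a) := by rw [h2, mul_one]
    _ = ((-1) ^ (b - a) * (-1) ^ a) * (-1) ^ a := by ring
    _ = (-1) ^ b * (-1) ^ a := by rw [← h1]

lemma sumIcoAux (n j : ℕ) (hj : j ≤ n) :
    ∑ i ∈ Finset.Ico j (n + 1), (-1 : ℤ) ^ (n - i) * ((n + 1).choose (i + 1)) =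
      (-1) ^ n * ((-1) ^ j * (n.choose j)) := by
  have h1 : ∀ i ∈ Finset.Ico j (n + 1), (-1 : ℤ) ^ (n - i) * ((n + 1).choose (i + 1)) =
      (-1) ^ n * ((-1) ^ i * ((n + 1).choose (i + 1))) := by
    intro i hi
    have hin : i ≤ n := by
      have := (Finset.mem_Ico.mp hi).2; omega
    rw [neg_pow_sub hin, mul_assoc]
  rw [Finset.sum_congr rfl h1, ← Finset.mul_sum,
    Finset.sum_Ico_eq_sub _ (by omega), Lp' n (n + 1), Lp' n j]
  rw [Nat.choose_eq_zero_of_lt (by omega)]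
  push_cast
  ring

lemma T_eq (n : ℕ) :
    ∑ k ∈ Finset.Icc 1 (n + 1), (-1 : ℤ) ^ (n + 1 - k) * ((n + 1).choose k) * aSeq (k - 1) =
      (-1) ^ n * Wseq n := by
  rw [← Finset.Ico_add_one_right_eq_Icc, Finset.sum_Ico_eq_sum_range]
  have hr : n + 1 + 1 - 1 = n + 1 := by omega
  rw [hr]
  have h1 : ∀ i ∈ Finset.range (n + 1),
      (-1 : ℤ) ^ (n + 1 - (1 + i)) * ((n + 1).choose (1 + i)) * aSeq (1 + i - 1) =
        ∑ j ∈ Finset.range (i + 1), (-1 : ℤ) ^ (n - i) * ((n + 1).choose (i + 1)) * invRec j := by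
    intro i _
    have e1 : n + 1 - (1 + i) = n - i := by omega
    have e2 : 1 + i - 1 = i := by omega
    have e3 : 1 + i = i + 1 := by omega
    rw [e1, e2, e3, aSeq]
    push_cast
    rw [Finset.mul_sum]
  rw [Finset.sum_congr rfl h1]
  simp only [Finset.range_eq_Ico]
  rw [← Finset.sum_Ico_Ico_comm 0 (n + 1)
    (fun i j => (-1 : ℤ) ^ (n - j) * ((n + 1).choose (j + 1)) * invRec i)]
  have h2 : ∀ j ∈ Finset.Ico 0 (n + 1),
      ∑ i ∈ Finset.Ico j (n + 1), (-1 : ℤ) ^ (n - i) * ((n + 1).choose (i + 1)) * invRec j =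
        (-1) ^ n * ((-1) ^ j * (n.choose j) * invRec j) := by
    intro j hj
    have hjn : j ≤ n := by
      have := (Finset.mem_Ico.mp hj).2; omega
    rw [← Finset.sum_mul, sumIcoAux n j hjn]
    ring
  rw [Finset.sum_congr rfl h2, ← Finset.mul_sum, Wseq, Finset.range_eq_Ico]

theorem alternating_sum_partial_sums :
    (∀ m : ℕ, ∑ k ∈ Finset.Icc 1 (2 * m + 1),
        (-1 : ℤ) ^ (2 * m + 1 - k) * (2 * m + 1).choose k * aSeq (k - 1) =
      ((2 * m).factorial / (2 ^ m * m.factorial) : ℕ)) ∧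
    (∀ m : ℕ, 1 ≤ m → ∑ k ∈ Finset.Icc 1 (2 * m),
        (-1 : ℤ) ^ (2 * m - k) * (2 * m).choose k * aSeq (k - 1) = 0) := by
  constructor
  · intro m
    rw [T_eq (2 * m), W_even, fac_div]
    have : (-1 : ℤ) ^ (2 * m) = 1 := by
      rw [pow_mul]; norm_num
    rw [this, one_mul]
  · intro m hm
    obtain ⟨m', rfl⟩ : ∃ m', m = m' + 1 := ⟨m - 1, by omega⟩
    have h : 2 * (m' + 1) = 2 * m' + 1 + 1 := by ring
    rw [h, T_eq (2 * m' + 1), W_odd, mul_zero]
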